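/- If every root of the permanental polynomial of a graph G is purely imaginary (i.e., has zero real part), then G is bipartite. -/

import Mathlib

set_option linter.unusedSectionVars false

open Polynomial

/-- The permanental polynomial of a simple graph `G`:
`π(G, x) = per(x I − A(G))`, computed over `ℂ[X]`. -/
noncomputable def permPoly {V : Type*} [Fintype V] [DecidableEq V]
    (G : SimpleGraph V) : Polynomial ℂ :=
  letI := Classical.decRel G.Adj
  Matrix.permanent ((X : Polynomial ℂ) • (1 : Matrix V V (Polynomial ℂ))
      - (SimpleGraph.adjMatrix (Polynomial ℂ) G))

section Aux

variable {V : Type*} [Fintype V] [DecidableEq V] (G : SimpleGraph V)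

lemma PP.permanent_map {R S : Type*} [CommSemiring R] [CommSemiring S]
    (f : R →+* S) (M : Matrix V V R) :
    (M.map f).permanent = f M.permanent := by
  simp [Matrix.permanent, map_sum, map_prod, Matrix.map_apply]

/-- adjacency matrix with the classical decidability instance -/
noncomputable def PP.Amat (R : Type*) [CommSemiring R] : Matrix V V R :=
  letI := Classical.decRel G.Adj
  SimpleGraph.adjMatrix R G

lemma PP.Amat_apply_adj {R : Type*} [CommSemiring R] {i j : V} (h : G.Adj i j) :
    PP.Amat G R i j = 1 := by
  letI := Classical.decRel G.Adj
  simp [PP.Amat, h]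

lemma PP.Amat_apply_not_adj {R : Type*} [CommSemiring R] {i j : V} (h : ¬ G.Adj i j) :
    PP.Amat G R i j = 0 := by
  letI := Classical.decRel G.Adj
  simp [PP.Amat, h]

lemma PP.Amat_diag {R : Type*} [CommSemiring R] (i : V) : PP.Amat G R i i = 0 :=
  PP.Amat_apply_not_adj G (G.irrefl)

lemma PP.permPoly_eq :
    permPoly G = Matrix.permanent
      ((X : Polynomial ℂ) • (1 : Matrix V V (Polynomial ℂ)) - PP.Amat G (Polynomial ℂ)) := rfl

/-- the matrix entries -/
lemma PP.entry_diag (i : V) :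
    ((X : Polynomial ℂ) • (1 : Matrix V V (Polynomial ℂ)) - PP.Amat G (Polynomial ℂ)) i i
      = X := by
  simp [Matrix.sub_apply, Matrix.smul_apply, Matrix.one_apply_eq, PP.Amat_diag, smul_eq_mul]

lemma PP.entry_off {i j : V} (h : j ≠ i) :
    ((X : Polynomial ℂ) • (1 : Matrix V V (Polynomial ℂ)) - PP.Amat G (Polynomial ℂ)) j i
      = - PP.Amat G (Polynomial ℂ) j i := by
  simp [Matrix.sub_apply, Matrix.smul_apply, Matrix.one_apply_ne h, smul_eq_mul]

lemma PP.Amat_natDegree_zero (j i : V) :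
    (PP.Amat G (Polynomial ℂ) j i).natDegree = 0 := by
  by_cases h : G.Adj j i
  · rw [PP.Amat_apply_adj G h]; simp
  · rw [PP.Amat_apply_not_adj G h]; simp

lemma PP.entry_natDegree_le (σ : Equiv.Perm V) (i : V) :
    (((X : Polynomial ℂ) • (1 : Matrix V V (Polynomial ℂ)) - PP.Amat G (Polynomial ℂ))
      (σ i) i).natDegree ≤ 1 := by
  rcases eq_or_ne (σ i) i with h | h
  · rw [h, PP.entry_diag]; simp
  · rw [PP.entry_off G h, natDegree_neg, PP.Amat_natDegree_zero]; omega

lemma PP.natDegree_le : (permPoly G).natDegree ≤ Fintype.card V := by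
  rw [PP.permPoly_eq, Matrix.permanent]
  refine natDegree_sum_le_of_forall_le _ _ (fun σ _ => ?_)
  refine (natDegree_prod_le _ _).trans ?_
  calc ∑ i, (((X : Polynomial ℂ) • (1 : Matrix V V (Polynomial ℂ)) - PP.Amat G (Polynomial ℂ))
        (σ i) i).natDegree ≤ ∑ _i : V, 1 :=
        Finset.sum_le_sum (fun i _ => PP.entry_natDegree_le G σ i)
    _ = Fintype.card V := by simp

lemma PP.coeff_card : (permPoly G).coeff (Fintype.card V) = 1 := by
  classical
  rw [PP.permPoly_eq, Matrix.permanent, finset_sum_coeff]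
  rw [Finset.sum_eq_single (1 : Equiv.Perm V)]
  · have : ∀ i : V, ((X : Polynomial ℂ) • (1 : Matrix V V (Polynomial ℂ))
        - PP.Amat G (Polynomial ℂ)) ((1 : Equiv.Perm V) i) i = X := fun i => PP.entry_diag G i
    simp only [this, Finset.prod_const, Finset.card_univ]
    simp [coeff_X_pow]
  · intro σ _ hσ
    -- natDegree of the product is < card V
    obtain ⟨j, hj⟩ : ∃ j, σ j ≠ j := by
      by_contra hall
      push_neg at hall
      exact hσ (Equiv.ext fun x => hall x)
    apply coeff_eq_zero_of_natDegree_lt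
    have hb : (∏ i, (((X : Polynomial ℂ) • (1 : Matrix V V (Polynomial ℂ))
        - PP.Amat G (Polynomial ℂ)) (σ i) i)).natDegree
        ≤ ∑ i, (((X : Polynomial ℂ) • (1 : Matrix V V (Polynomial ℂ))
          - PP.Amat G (Polynomial ℂ)) (σ i) i).natDegree := natDegree_prod_le _ _
    have hj0 : (((X : Polynomial ℂ) • (1 : Matrix V V (Polynomial ℂ))
        - PP.Amat G (Polynomial ℂ)) (σ j) j).natDegree = 0 := by
      rw [PP.entry_off G hj, natDegree_neg, PP.Amat_natDegree_zero]
    have hsum : ∑ i, (((X : Polynomial ℂ) • (1 : Matrix V V (Polynomial ℂ))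
        - PP.Amat G (Polynomial ℂ)) (σ i) i).natDegree ≤ Fintype.card V - 1 := by
      rw [← Finset.sum_erase_add _ _ (Finset.mem_univ j), hj0, add_zero]
      calc ∑ i ∈ Finset.univ.erase j, (((X : Polynomial ℂ) • (1 : Matrix V V (Polynomial ℂ))
            - PP.Amat G (Polynomial ℂ)) (σ i) i).natDegree
          ≤ ∑ _i ∈ Finset.univ.erase j, 1 :=
            Finset.sum_le_sum (fun i _ => PP.entry_natDegree_le G σ i)
        _ = Fintype.card V - 1 := by
            simp [Finset.card_erase_of_mem, Finset.card_univ]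
    have hpos : 0 < Fintype.card V := Fintype.card_pos_iff.mpr ⟨j⟩
    omega
  · intro h; exact absurd (Finset.mem_univ _) h



lemma PP.monic : (permPoly G).Monic :=
  monic_of_natDegree_le_of_coeff_eq_one _ (PP.natDegree_le G) (PP.coeff_card G)

lemma PP.natDegree_eq : (permPoly G).natDegree = Fintype.card V :=
  le_antisymm (PP.natDegree_le G) (le_natDegree_of_ne_zero (by rw [PP.coeff_card G]; exact one_ne_zero))

lemma PP.map_conj : (permPoly G).map (starRingEnd ℂ) = permPoly G := by
  have : (permPoly G).map (starRingEnd ℂ)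
      = (Polynomial.mapRingHom (starRingEnd ℂ)) (permPoly G) := rfl
  rw [this, PP.permPoly_eq, ← PP.permanent_map]
  congr 1
  refine Matrix.ext fun j i => ?_
  rcases eq_or_ne j i with rfl | h
  · rw [Matrix.map_apply, PP.entry_diag]
    simp
  · rw [Matrix.map_apply, PP.entry_off G h]
    by_cases hadj : G.Adj j i
    · rw [PP.Amat_apply_adj G hadj]; simp
    · rw [PP.Amat_apply_not_adj G hadj]; simp

lemma PP.roots_neg (h : ∀ z ∈ (permPoly G).roots, z.re = 0) :
    (permPoly G).roots.map (fun z => -z) = (permPoly G).roots := by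
  have hs : Splits (permPoly G) := IsAlgClosed.splits _
  have h1 : ((permPoly G).map (starRingEnd ℂ)).roots
      = (permPoly G).roots.map (starRingEnd ℂ) := hs.roots_map_of_injective (starRingEnd ℂ).injective
  rw [PP.map_conj G] at h1
  have h2 : (permPoly G).roots.map (starRingEnd ℂ)
      = (permPoly G).roots.map (fun z => -z) := by
    apply Multiset.map_congr rfl
    intro z hz
    have := h z hz
    apply Complex.ext <;> simp [this]
  rw [← h2, ← h1]

lemma PP.eval_neg_one (h : ∀ z ∈ (permPoly G).roots, z.re = 0) :
    (permPoly G).eval (-1) = (-1) ^ (Fintype.card V) * (permPoly G).eval 1 := by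
  have hs : Splits (permPoly G) := IsAlgClosed.splits _
  have hcard : Multiset.card (permPoly G).roots = Fintype.card V := by
    rw [splits_iff_card_roots.mp hs, PP.natDegree_eq]
  have hp := hs.eq_prod_roots_of_monic (PP.monic G)
  have heval : ∀ c : ℂ, (permPoly G).eval c
      = ((permPoly G).roots.map (fun a => c - a)).prod := by
    intro c
    conv_lhs => rw [hp]
    rw [eval_multiset_prod, Multiset.map_map]
    congr 1
    apply Multiset.map_congr rfl
    intro z _
    simp
  rw [heval, heval]
  have key : (permPoly G).roots.map (fun a => (-1 : ℂ) - a)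
      = (permPoly G).roots.map (fun b => (-1 : ℂ) * (1 - b)) := by
    conv_rhs => rw [← PP.roots_neg G h, Multiset.map_map]
    apply Multiset.map_congr rfl
    intro z _
    simp only [Function.comp_apply]
    ring
  rw [key, Multiset.prod_map_mul]
  congr 1
  rw [Multiset.map_const', Multiset.prod_replicate, hcard]

lemma PP.perm_eval (c : ℂ) :
    Matrix.permanent (c • (1 : Matrix V V ℂ) - PP.Amat G ℂ) = (permPoly G).eval c := by
  have : (permPoly G).eval c = (Polynomial.evalRingHom c) (permPoly G) := rfl
  rw [this, PP.permPoly_eq, ← PP.permanent_map]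
  congr 1
  refine Matrix.ext fun j i => ?_
  rcases eq_or_ne j i with rfl | h
  · rw [Matrix.map_apply, PP.entry_diag]
    simp [Matrix.sub_apply, Matrix.smul_apply, Matrix.one_apply_eq, PP.Amat_diag, smul_eq_mul]
  · rw [Matrix.map_apply, PP.entry_off G h]
    rw [Matrix.sub_apply, Matrix.smul_apply, Matrix.one_apply_ne h]
    by_cases hadj : G.Adj j i
    · rw [PP.Amat_apply_adj G hadj, PP.Amat_apply_adj G hadj]; simp
    · rw [PP.Amat_apply_not_adj G hadj, PP.Amat_apply_not_adj G hadj]; simp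

lemma PP.complex_perm_eq (h : ∀ z ∈ (permPoly G).roots, z.re = 0) :
    Matrix.permanent ((1 : Matrix V V ℂ) + PP.Amat G ℂ)
      = Matrix.permanent ((1 : Matrix V V ℂ) - PP.Amat G ℂ) := by
  have h1 : (1 : Matrix V V ℂ) + PP.Amat G ℂ
      = (-1 : ℂ) • ((-1 : ℂ) • (1 : Matrix V V ℂ) - PP.Amat G ℂ) := by
    rw [smul_sub, smul_smul]
    norm_num
  have h2 : ((1 : Matrix V V ℂ) - PP.Amat G ℂ)
      = (1 : ℂ) • (1 : Matrix V V ℂ) - PP.Amat G ℂ := by rw [one_smul]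
  rw [h1, Matrix.permanent_smul, PP.perm_eval, h2, PP.perm_eval, PP.eval_neg_one G h,
    ← mul_assoc, ← mul_pow]
  norm_num

lemma PP.real_perm_eq (h : ∀ z ∈ (permPoly G).roots, z.re = 0) :
    Matrix.permanent ((1 : Matrix V V ℝ) + PP.Amat G ℝ)
      = Matrix.permanent ((1 : Matrix V V ℝ) - PP.Amat G ℝ) := by
  have hinj := Complex.ofReal_injective
  apply hinj
  have hmapP : ((1 : Matrix V V ℝ) + PP.Amat G ℝ).map (Complex.ofRealHom)
      = (1 : Matrix V V ℂ) + PP.Amat G ℂ := by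
    refine Matrix.ext fun j i => ?_
    rw [Matrix.map_apply, Matrix.add_apply, Matrix.add_apply]
    by_cases hadj : G.Adj j i
    · rw [PP.Amat_apply_adj G hadj, PP.Amat_apply_adj G hadj]
      rcases eq_or_ne j i with rfl | hne
      · simp
      · rw [Matrix.one_apply_ne hne, Matrix.one_apply_ne hne]; simp
    · rw [PP.Amat_apply_not_adj G hadj, PP.Amat_apply_not_adj G hadj]
      rcases eq_or_ne j i with rfl | hne
      · simp
      · rw [Matrix.one_apply_ne hne, Matrix.one_apply_ne hne]; simp
  have hmapM : ((1 : Matrix V V ℝ) - PP.Amat G ℝ).map (Complex.ofRealHom)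
      = (1 : Matrix V V ℂ) - PP.Amat G ℂ := by
    refine Matrix.ext fun j i => ?_
    rw [Matrix.map_apply, Matrix.sub_apply, Matrix.sub_apply]
    by_cases hadj : G.Adj j i
    · rw [PP.Amat_apply_adj G hadj, PP.Amat_apply_adj G hadj]
      rcases eq_or_ne j i with rfl | hne
      · simp
      · rw [Matrix.one_apply_ne hne, Matrix.one_apply_ne hne]; simp
    · rw [PP.Amat_apply_not_adj G hadj, PP.Amat_apply_not_adj G hadj]
      rcases eq_or_ne j i with rfl | hne
      · simp
      · rw [Matrix.one_apply_ne hne, Matrix.one_apply_ne hne]; simp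
  have e1 : (Complex.ofRealHom (Matrix.permanent ((1 : Matrix V V ℝ) + PP.Amat G ℝ)))
      = Matrix.permanent ((1 : Matrix V V ℂ) + PP.Amat G ℂ) := by
    rw [← hmapP, PP.permanent_map]
  have e2 : (Complex.ofRealHom (Matrix.permanent ((1 : Matrix V V ℝ) - PP.Amat G ℝ)))
      = Matrix.permanent ((1 : Matrix V V ℂ) - PP.Amat G ℂ) := by
    rw [← hmapM, PP.permanent_map]
  show (Complex.ofRealHom _ : ℂ) = Complex.ofRealHom _
  rw [e1, e2, PP.complex_perm_eq G h]


lemma PP.colorable_of_no_odd (hno : ∀ (u : V) (p : G.Walk u u), ¬ Odd p.length) :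
    G.Colorable 2 := by
  classical
  let rep : V → V := fun v => (G.connectedComponentMk v).out
  have hre : ∀ v, G.Reachable (rep v) v := by
    intro v
    have : G.connectedComponentMk (rep v) = G.connectedComponentMk v :=
      (G.connectedComponentMk v).out_eq
    exact SimpleGraph.ConnectedComponent.eq.mp this
  let w : ∀ v, G.Walk (rep v) v := fun v => (hre v).some
  let col : V → Bool := fun v => decide ((w v).length % 2 = 0)
  have valid : ∀ {a b : V}, G.Adj a b → col a ≠ col b := by
    intro a b hadj
    have hrepeq : rep a = rep b := by
      have h1 : G.connectedComponentMk a = G.connectedComponentMk b :=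
        SimpleGraph.ConnectedComponent.sound hadj.reachable
      simpa [rep] using congrArg (fun c : G.ConnectedComponent => c.out) h1
    have hloop := hno (rep a)
      (((w a).append (SimpleGraph.Walk.cons hadj (w b).reverse)).copy rfl hrepeq.symm)
    rw [Nat.not_odd_iff_even, Nat.even_iff] at hloop
    simp only [SimpleGraph.Walk.length_copy, SimpleGraph.Walk.length_append,
      SimpleGraph.Walk.length_cons, SimpleGraph.Walk.length_reverse] at hloop
    simp only [col, ne_eq, decide_eq_decide]
    omega
  have c : G.Coloring Bool := SimpleGraph.Coloring.mk col (fun hab => valid hab)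
  have := c.colorable
  simpa using this

lemma PP.exists_cycle_list (u : V) (p : G.Walk u u) (hodd : Odd p.length) :
    ∃ (l : List V) (hne : l ≠ []), l.Nodup ∧ Odd l.length ∧ l.Chain' G.Adj ∧
      G.Adj (l.getLast hne) (l.head hne) := by
  classical
  suffices H : ∀ n : ℕ, ∀ (u : V) (p : G.Walk u u), p.length = n → Odd n →
      ∃ (l : List V) (hne : l ≠ []), l.Nodup ∧ Odd l.length ∧ l.Chain' G.Adj ∧
        G.Adj (l.getLast hne) (l.head hne) by
    exact H p.length u p rfl hodd
  intro n
  induction n using Nat.strong_induction_on with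
  | _ n IH =>
    intro u p hlen hodd
    have hn1 : 1 ≤ n := by
      rcases hodd with ⟨k, hk⟩; omega
    by_cases hnd : p.support.tail.Nodup
    · -- the walk is already (essentially) a cycle
      cases p with
      | nil => rw [SimpleGraph.Walk.length_nil] at hlen; omega
      | @cons _ v _ h₁ p' =>
        rw [SimpleGraph.Walk.length_cons] at hlen
        rw [SimpleGraph.Walk.support_cons, List.tail_cons] at hnd
        -- key split of the support of p'
        have hA : p'.support = p'.support.dropLast ++ [u] := by
          have h0 := List.dropLast_concat_getLast (l := p'.support) p'.support_ne_nil
          simp only [SimpleGraph.Walk.getLast_support] at h0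
          exact h0.symm
        refine ⟨u :: p'.support.dropLast, by simp, ?_, ?_, ?_, ?_⟩
        · -- Nodup
          refine List.nodup_cons.mpr ⟨?_, hnd.sublist (List.dropLast_sublist _)⟩
          have hnd2 := hnd
          rw [hA] at hnd2
          have hdisj := List.disjoint_of_nodup_append hnd2
          intro hmem
          exact hdisj hmem (List.mem_singleton_self u)
        · -- Odd length
          have hl : (u :: p'.support.dropLast).length = n := by
            have := p'.length_support
            simp only [List.length_cons, List.length_dropLast]
            omega
          rw [hl]; exact hodd
        · -- Chain'
          have hpre : (u :: p'.support.dropLast) <+: (u :: p'.support) := by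
            refine ⟨[u], ?_⟩
            rw [List.cons_append, ← hA]
          have := SimpleGraph.Walk.isChain_adj_support (SimpleGraph.Walk.cons h₁ p')
          rw [SimpleGraph.Walk.support_cons] at this
          exact this.prefix hpre
        · -- Adj getLast head
          have hch := SimpleGraph.Walk.isChain_adj_support (SimpleGraph.Walk.cons h₁ p')
          rw [SimpleGraph.Walk.support_cons, hA, ← List.cons_append] at hch
          obtain ⟨-, -, hrel⟩ := List.isChain_append.mp hch
          have hadj : G.Adj ((u :: p'.support.dropLast).getLast (by simp)) u := by
            apply hrel
            · rw [List.getLast?_eq_getLast (by simp)]; rfl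
            · rfl
          exact hadj
    · -- there is a repeated vertex; split the walk
      obtain ⟨x, hx2⟩ : ∃ x, 2 ≤ p.support.tail.count x := by
        by_contra hcon
        push_neg at hcon
        exact hnd (List.nodup_iff_count_le_one.mpr (fun a => by have := hcon a; omega))
      have hxmem : x ∈ p.support := by
        apply List.mem_of_mem_tail
        rw [← List.count_pos_iff]; omega
      obtain ⟨q, hqlen, hqcount⟩ : ∃ q : G.Walk x x, q.length = n ∧
          2 ≤ q.support.tail.count x := by
        refine ⟨p.rotate x hxmem, ?_, ?_⟩
        · have hts := congrArg SimpleGraph.Walk.length (p.take_spec hxmem)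
          rw [SimpleGraph.Walk.length_append] at hts
          rw [SimpleGraph.Walk.rotate, SimpleGraph.Walk.length_append]
          omega
        · rw [((p.support_rotate x hxmem).perm).count_eq]
          exact hx2
      cases q with
      | nil =>
        rw [SimpleGraph.Walk.length_nil] at hqlen; omega
      | @cons _ y _ h₂ q' =>
        rw [SimpleGraph.Walk.length_cons] at hqlen
        rw [SimpleGraph.Walk.support_cons, List.tail_cons] at hqcount
        have hxq' : x ∈ q'.support := by
          rw [← List.count_pos_iff]; omega
        have hts := q'.take_spec hxq'
        have hrcount : 1 ≤ (q'.dropUntil x hxq').support.tail.count x := by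
          have hc1 := q'.count_support_takeUntil_eq_one hxq'
          have := congrArg (fun l : G.Walk y x => l.support.count x) hts
          rw [SimpleGraph.Walk.support_append, List.count_append, hc1] at this
          omega
        have hrlen : 1 ≤ (q'.dropUntil x hxq').length := by
          have hc2 := List.count_le_length (a := x) (l := (q'.dropUntil x hxq').support.tail)
          have h3 := List.length_tail (l := (q'.dropUntil x hxq').support)
          have h4 := (q'.dropUntil x hxq').length_support
          omega
        have hlens : (q'.takeUntil x hxq').length + (q'.dropUntil x hxq').length
            = q'.length := by
          have := congrArg SimpleGraph.Walk.length hts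
          rw [SimpleGraph.Walk.length_append] at this
          exact this
        set a := (q'.takeUntil x hxq').length + 1 with ha
        set b := (q'.dropUntil x hxq').length with hb
        have hab : a + b = n := by omega
        rcases Nat.even_or_odd b with hbe | hbo
        · have hao : Odd a := by
            rw [Nat.odd_iff] at hodd ⊢
            rw [Nat.even_iff] at hbe
            omega
          exact IH a (by omega) x (SimpleGraph.Walk.cons h₂ (q'.takeUntil x hxq'))
            (by rw [SimpleGraph.Walk.length_cons]) hao
        · exact IH b (by omega) x (q'.dropUntil x hxq') rfl hbo

lemma PP.adj_formPerm {l : List V} (hnd : l.Nodup) (h2 : 2 ≤ l.length)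
    (hne : l ≠ []) (hchain : l.Chain' G.Adj)
    (hlast : G.Adj (l.getLast hne) (l.head hne)) :
    ∀ x ∈ l, G.Adj (l.formPerm x) x := by
  intro x hx
  obtain ⟨i, hi, rfl⟩ := List.mem_iff_getElem.mp hx
  rw [List.formPerm_apply_getElem l hnd i hi]
  rcases eq_or_lt_of_le (Nat.succ_le_of_lt hi) with he | hlt
  · -- i + 1 = l.length : wrap around
    have hmod : (i + 1) % l.length = 0 := by
      have : i + 1 = l.length := he
      simp [this]
    have hgl : l.getLast hne = l[i] := by
      rw [List.getLast_eq_getElem]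
      congr 1
      omega
    simp only [hmod]
    rw [List.getElem_zero, ← hgl]
    exact hlast.symm
  · have hmod : (i + 1) % l.length = i + 1 := Nat.mod_eq_of_lt hlt
    have hch := List.isChain_iff_getElem.mp hchain i (by omega)
    simp only [hmod]
    exact hch.symm

theorem bipartite_of_purely_imaginary_perSpectrum'
    (h : ∀ z ∈ (permPoly G).roots, z.re = 0) :
    G.Colorable 2 := by
  classical
  by_contra hc
  -- there is an odd closed walk
  obtain ⟨u, p, hodd⟩ : ∃ (u : V) (p : G.Walk u u), Odd p.length := by
    by_contra hno
    push_neg at hno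
    exact hc (PP.colorable_of_no_odd G (fun u p => by
      intro ho; exact (by simpa using hno u p ho)))
  obtain ⟨l, hne, hnd, hlodd, hchain, hlast⟩ := PP.exists_cycle_list G u p hodd
  -- l has length at least 2 (in fact 3)
  have h2 : 2 ≤ l.length := by
    by_contra hcon
    push_neg at hcon
    interval_cases hl : l.length
    · exact hne (List.length_eq_zero_iff.mp hl)
    · obtain ⟨a, rfl⟩ := List.length_eq_one_iff.mp hl
      simp only [List.getLast_singleton, List.head_cons] at hlast
      exact G.irrefl hlast
  set σ := l.formPerm with hσ
  have hsupp : σ.support = l.toFinset :=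
    List.support_formPerm_of_nodup l hnd (by
      intro x hx
      rw [hx] at h2; simp at h2)
  have hmoves : ∀ x ∈ l, σ x ≠ x := by
    intro x hx
    have hxs : x ∈ σ.support := by rw [hsupp]; exact List.mem_toFinset.mpr hx
    exact Equiv.Perm.mem_support.mp hxs
  have hfix : ∀ x, x ∉ l → σ x = x := fun x hx => List.formPerm_apply_of_notMem hx
  have hadjσ : ∀ x ∈ l, G.Adj (σ x) x := PP.adj_formPerm G hnd h2 hne hchain hlast
  -- entrywise comparison
  have hentry : ∀ (τ : Equiv.Perm V) (i : V),
      ((1 : Matrix V V ℝ) + PP.Amat G ℝ) (τ i) i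
        = |((1 : Matrix V V ℝ) - PP.Amat G ℝ) (τ i) i| := by
    intro τ i
    rw [Matrix.add_apply, Matrix.sub_apply]
    rcases eq_or_ne (τ i) i with he | hne'
    · rw [he, Matrix.one_apply_eq, PP.Amat_diag]
      norm_num
    · rw [Matrix.one_apply_ne hne']
      by_cases hadj : G.Adj (τ i) i
      · rw [PP.Amat_apply_adj G hadj]; norm_num
      · rw [PP.Amat_apply_not_adj G hadj]; norm_num
  have hterm : ∀ τ : Equiv.Perm V,
      ∏ i, ((1 : Matrix V V ℝ) - PP.Amat G ℝ) (τ i) i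
        ≤ ∏ i, ((1 : Matrix V V ℝ) + PP.Amat G ℝ) (τ i) i := by
    intro τ
    calc ∏ i, ((1 : Matrix V V ℝ) - PP.Amat G ℝ) (τ i) i
        ≤ |∏ i, ((1 : Matrix V V ℝ) - PP.Amat G ℝ) (τ i) i| := le_abs_self _
      _ = ∏ i, |((1 : Matrix V V ℝ) - PP.Amat G ℝ) (τ i) i| := Finset.abs_prod _ _
      _ = ∏ i, ((1 : Matrix V V ℝ) + PP.Amat G ℝ) (τ i) i := by
          exact Finset.prod_congr rfl (fun i _ => (hentry τ i).symm)
  -- the strict inequality at σ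
  have hplus : ∏ i, ((1 : Matrix V V ℝ) + PP.Amat G ℝ) (σ i) i = 1 := by
    apply Finset.prod_eq_one
    intro i _
    rw [Matrix.add_apply]
    by_cases hil : i ∈ l
    · rw [Matrix.one_apply_ne (hmoves i hil), PP.Amat_apply_adj G (hadjσ i hil)]
      norm_num
    · rw [hfix i hil, Matrix.one_apply_eq, PP.Amat_diag]
      norm_num
  have hminus : ∏ i, ((1 : Matrix V V ℝ) - PP.Amat G ℝ) (σ i) i = -1 := by
    have hsplit := Finset.prod_mul_prod_compl l.toFinset
      (fun i => ((1 : Matrix V V ℝ) - PP.Amat G ℝ) (σ i) i)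
    rw [← hsplit]
    have hA : ∏ i ∈ l.toFinset, ((1 : Matrix V V ℝ) - PP.Amat G ℝ) (σ i) i
        = (-1 : ℝ) ^ l.length := by
      rw [Finset.prod_congr rfl (fun i hi => ?_), Finset.prod_const,
        List.toFinset_card_of_nodup hnd]
      have hil := List.mem_toFinset.mp hi
      rw [Matrix.sub_apply, Matrix.one_apply_ne (hmoves i hil),
        PP.Amat_apply_adj G (hadjσ i hil)]
      norm_num
    have hB : ∏ i ∈ l.toFinsetᶜ, ((1 : Matrix V V ℝ) - PP.Amat G ℝ) (σ i) i = 1 := by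
      apply Finset.prod_eq_one
      intro i hi
      have hil : i ∉ l := fun hcon =>
        (Finset.mem_compl.mp hi) (List.mem_toFinset.mpr hcon)
      rw [Matrix.sub_apply, hfix i hil, Matrix.one_apply_eq, PP.Amat_diag]
      norm_num
    rw [hA, hB, mul_one, hlodd.neg_one_pow]
  have hstrict : ∏ i, ((1 : Matrix V V ℝ) - PP.Amat G ℝ) (σ i) i
      < ∏ i, ((1 : Matrix V V ℝ) + PP.Amat G ℝ) (σ i) i := by
    rw [hplus, hminus]; norm_num
  have hsumlt : Matrix.permanent ((1 : Matrix V V ℝ) - PP.Amat G ℝ)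
      < Matrix.permanent ((1 : Matrix V V ℝ) + PP.Amat G ℝ) := by
    rw [Matrix.permanent, Matrix.permanent]
    exact Finset.sum_lt_sum (fun τ _ => hterm τ) ⟨σ, Finset.mem_univ σ, hstrict⟩
  rw [PP.real_perm_eq G h] at hsumlt
  exact lt_irrefl _ hsumlt
end Aux


/-- If every root of the permanental polynomial of `G` is purely imaginary,
then `G` is bipartite. -/
theorem bipartite_of_purely_imaginary_perSpectrum
    {V : Type*} [Fintype V] [DecidableEq V] (G : SimpleGraph V)
    (h : ∀ z ∈ (permPoly G).roots, z.re = 0) :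
    G.Colorable 2 := by
  exact bipartite_of_purely_imaginary_perSpectrum' G h
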